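/- Let a, b, c, d be real numbers with ac ≠ 0 such that Δ_Δ := c² − a²(cx_A + d) > 0 and B(x_A) := cx_A + d > 0, where x_A = −b/a and x_B = −d/c. Let x_Δ^± = x_A + (−2c ± 2√Δ_Δ)/a² be the two real roots of Δ(z) = a²z² + (2ab+4c)z + (b²+4d). Then the intersection of the real interval [x_Δ^−, x_Δ^+] with the circle C₀ = {z : |z − x_B| = |x_A − x_B|} is exactly the single point {2x_B − x_A}. -/

import Mathlib

theorem stmt_10 (a b c d : ℝ) (h : a * c ≠ 0)
    (hΔΔ : 0 < c ^ 2 - a ^ 2 * (c * (-b / a) + d))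
    (hB : 0 < c * (-b / a) + d) :
    ((fun x : ℝ => (x : ℂ)) ''
        Set.Icc ((-b / a) + (-2 * c - 2 * Real.sqrt (c ^ 2 - a ^ 2 * (c * (-b / a) + d))) / a ^ 2)
                ((-b / a) + (-2 * c + 2 * Real.sqrt (c ^ 2 - a ^ 2 * (c * (-b / a) + d))) / a ^ 2)) ∩
      {z : ℂ | ‖z - ((-d / c : ℝ) : ℂ)‖ = |(-b / a) - (-d / c)|}
    = {((2 * (-d / c) - (-b / a) : ℝ) : ℂ)} := by
  have ha : a ≠ 0 := fun h' => h (by simp [h'])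
  have hc : c ≠ 0 := fun h' => h (by simp [h'])
  have ha2 : (0:ℝ) < a ^ 2 := by positivity
  have hc2 : (0:ℝ) < c ^ 2 := by positivity
  set D := c ^ 2 - a ^ 2 * (c * (-b / a) + d) with hD
  set s := Real.sqrt D with hsdef
  have hs2 : s ^ 2 = D := Real.sq_sqrt hΔΔ.le
  have hsp : 0 < s := Real.sqrt_pos.mpr hΔΔ
  clear_value s D
  -- key identity : a^2 * ((-d/c) - (-b/a)) + c = D / c
  have hkey : a ^ 2 * ((-d/c) - (-b/a)) + c = D / c := by
    rw [hD]; field_simp; ring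
  have hDc2 : D ≤ c ^ 2 := by
    have := mul_pos ha2 hB
    rw [hD]; linarith
  have habs2 : (D / c) ^ 2 ≤ s ^ 2 := by
    rw [hs2, div_pow, div_le_iff₀ hc2]; nlinarith [hΔΔ]
  have hlb : -s ≤ D / c := by nlinarith [hsp, habs2]
  have hub : D / c ≤ s := by nlinarith [hsp, habs2]
  ext z
  simp only [Set.mem_inter_iff, Set.mem_image, Set.mem_Icc, Set.mem_setOf_eq,
    Set.mem_singleton_iff]
  constructor
  · rintro ⟨⟨x, ⟨hx1, hx2⟩, rfl⟩, habs⟩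
    rw [show ((x:ℂ) - ((-d/c:ℝ):ℂ)) = ((x - (-d/c) : ℝ) : ℂ) by push_cast; ring,
        Complex.norm_real, Real.norm_eq_abs] at habs
    have hsq : (x - (-d/c))^2 = ((-b/a) - (-d/c))^2 := by
      rw [← sq_abs, ← sq_abs ((-b/a) - (-d/c)), habs]
    have h1 : (-2*c - 2*s) ≤ (x - (-b/a)) * a^2 := by
      have h1' : (-2*c - 2*s)/a^2 ≤ x - (-b/a) := by linarith [hx1]
      exact (div_le_iff₀ ha2).mp h1'
    have h2 : (x - (-b/a)) * a^2 ≤ (-2*c + 2*s) := by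
      have h2' : x - (-b/a) ≤ (-2*c + 2*s)/a^2 := by linarith [hx2]
      exact (le_div_iff₀ ha2).mp h2'
    have hprod : (x - (-b/a)) * (x - (2*(-d/c) - (-b/a))) = 0 := by
      linear_combination hsq
    rcases mul_eq_zero.mp hprod with h0 | h0
    · exfalso
      rw [h0, zero_mul] at h1 h2
      have hcs1 : -c ≤ s := by linarith
      have hcs2 : c ≤ s := by linarith
      have hc2s : c ^ 2 ≤ s ^ 2 := by nlinarith [hcs1, hcs2, hsp]
      rw [hs2, hD] at hc2s
      nlinarith [mul_pos ha2 hB]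
    · have hx : x = 2*(-d/c) - (-b/a) := by linarith
      norm_cast
  · rintro rfl
    have hval : (2*(-d/c) - (-b/a) - (-b/a)) * a^2 = 2*(D/c) - 2*c := by
      linear_combination 2*hkey
    refine ⟨⟨2*(-d/c) - (-b/a), ⟨?_, ?_⟩, rfl⟩, ?_⟩
    · have b1 : (-2*c - 2*s)/a^2 ≤ 2*(-d/c) - (-b/a) - (-b/a) :=
        (div_le_iff₀ ha2).mpr (by linarith)
      linarith
    · have b2 : 2*(-d/c) - (-b/a) - (-b/a) ≤ (-2*c + 2*s)/a^2 :=
        (le_div_iff₀ ha2).mpr (by linarith)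
      linarith
    · rw [show (((2*(-d/c) - (-b/a) : ℝ)):ℂ) - ((-d/c:ℝ):ℂ)
          = (((-d/c) - (-b/a) : ℝ) : ℂ) by push_cast; ring, Complex.norm_real, Real.norm_eq_abs]
      rw [abs_sub_comm]
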